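/- Let X be a finite-dimensional normed real vector space. Then a Borel set S ⊂ X is shy if and only if S has Lebesgue measure zero. -/

import Mathlib

open MeasureTheory ENNReal

/-- A Borel set in a normed space is shy if some Borel measure, positive and finite on a
compact set, vanishes on all its translates. -/
def Shy {X : Type*} [NormedAddCommGroup X] [NormedSpace ℝ X]
    [MeasurableSpace X] [BorelSpace X] (S : Set X) : Prop :=
  ∃ μ : Measure X, (∃ U : Set X, IsCompact U ∧ 0 < μ U ∧ μ U < ⊤) ∧
    ∀ x : X, μ ((x + ·) '' S) = 0

/-- In a finite-dimensional normed real vector space, a Borel set is shy iff it has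
Lebesgue (Haar) measure zero. -/
theorem shy_iff_measure_zero
    {X : Type*} [NormedAddCommGroup X] [NormedSpace ℝ X] [FiniteDimensional ℝ X]
    [MeasurableSpace X] [BorelSpace X]
    (μ : Measure X) [μ.IsAddHaarMeasure]
    (S : Set X) (hS : MeasurableSet S) :
    Shy S ↔ μ S = 0 := by
  constructor
  · rintro ⟨ν, ⟨U, hUc, hUpos, hUfin⟩, hν⟩
    set ν' := ν.restrict U with hν'def
    have hν'fin : IsFiniteMeasure ν' := ⟨by rwa [Measure.restrict_apply_univ]⟩
    -- the integrand
    set f : X → X → ℝ≥0∞ := fun x y => S.indicator 1 (y - x) with hfdef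
    have hmeas : Measurable (Function.uncurry f) := by
      have : Function.uncurry f = (S.indicator (1 : X → ℝ≥0∞)) ∘ (fun p : X × X => p.2 - p.1) :=
        rfl
      rw [this]
      exact (measurable_const.indicator hS).comp (measurable_snd.sub measurable_fst)
    -- inner integral over ν' vanishes
    have h1 : ∀ x : X, ∫⁻ y, f x y ∂ν' = 0 := by
      intro x
      have hset : (fun y => y - x) ⁻¹' S = (x + ·) '' S := by
        ext y
        simp only [Set.mem_preimage, Set.mem_image]
        constructor
        · intro h; exact ⟨y - x, h, by abel⟩
        · rintro ⟨s, hs, rfl⟩; simpa using hs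
      have hm : MeasurableSet ((fun y => y - x) ⁻¹' S) := hS.preimage (measurable_sub_const x)
      have hle : ∫⁻ y, f x y ∂ν' ≤ 0 :=
        calc ∫⁻ y, f x y ∂ν' = ∫⁻ y, ((fun y => y - x) ⁻¹' S).indicator 1 y ∂ν' := by
              exact lintegral_congr fun y => rfl
          _ = ν' ((fun y => y - x) ⁻¹' S) := by
              rw [lintegral_indicator hm]; simp
          _ = ν ((fun y => y - x) ⁻¹' S ∩ U) := Measure.restrict_apply hm
          _ ≤ ν ((fun y => y - x) ⁻¹' S) := measure_mono Set.inter_subset_left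
          _ = ν ((x + ·) '' S) := by rw [hset]
          _ = 0 := hν x
      exact le_antisymm hle zero_le
    -- inner integral over μ is μ S
    have h2 : ∀ y : X, ∫⁻ x, f x y ∂μ = μ S := by
      intro y
      have hm : MeasurableSet ((fun x => y - x) ⁻¹' S) :=
        hS.preimage (measurable_const.sub measurable_id)
      calc ∫⁻ x, f x y ∂μ = ∫⁻ x, ((fun x => y - x) ⁻¹' S).indicator 1 x ∂μ := by
              exact lintegral_congr fun x => rfl
        _ = μ ((fun x => y - x) ⁻¹' S) := by rw [lintegral_indicator hm]; simp
        _ = μ S := (Measure.measurePreserving_sub_left μ y).measure_preimage hS.nullMeasurableSet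
    -- swap the integrals
    have hswap : ∫⁻ x, ∫⁻ y, f x y ∂ν' ∂μ = ∫⁻ y, ∫⁻ x, f x y ∂μ ∂ν' :=
      lintegral_lintegral_swap hmeas.aemeasurable
    have hL : ∫⁻ x, ∫⁻ y, f x y ∂ν' ∂μ = 0 := by simp [h1]
    have hR : ∫⁻ y, ∫⁻ x, f x y ∂μ ∂ν' = μ S * ν U := by
      simp only [h2]
      rw [lintegral_const]
      congr 1
      rw [Measure.restrict_apply_univ]
    have : μ S * ν U = 0 := by rw [← hR, ← hswap, hL]
    rcases mul_eq_zero.1 this with h | h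
    · exact h
    · exact absurd h hUpos.ne'
  · intro hμS
    refine ⟨μ, ⟨Metric.closedBall 0 1, isCompact_closedBall 0 1, ?_, ?_⟩, ?_⟩
    · exact Metric.measure_closedBall_pos μ 0 one_pos
    · exact (isCompact_closedBall 0 1).measure_lt_top
    · intro x
      have : (x + ·) '' S = (fun y => -x + y) ⁻¹' S := by
        ext y
        simp only [Set.mem_image, Set.mem_preimage]
        constructor
        · rintro ⟨s, hs, rfl⟩; simpa using hs
        · intro h; exact ⟨-x + y, h, by abel⟩
      rw [this, measure_preimage_add]
      exact hμS
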